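/- Representer theorem (exact interpolation/regularization form): Let H be a real Hilbert space, let η_1,...,η_n ∈ H, and let C : ℝⁿ → ℝ be any function. Then for any minimizer f* of the functional f ↦ C(⟨η_1,f⟩,...,⟨η_n,f⟩) + λ‖f‖², with λ > 0, f* lies in the span of η_1,...,η_n. More precisely, for any f ∈ H, writing f = f₀ + f₁ with f₀ ∈ span{η_i} and f₁ ⊥ span{η_i}, the objective at f₀ is no larger than at f. -/

import Mathlib

open InnerProductSpace

/-- Representer theorem: any minimizer of
`f ↦ C(⟪η₁,f⟫,…,⟪ηₙ,f⟫) + λ‖f‖²` lies in the span of the representers `ηᵢ`;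
more precisely, for `f = f₀ + f₁` with `f₀` in the span and `f₁` orthogonal to it,
the objective at `f₀` is no larger than at `f`. -/
theorem representer_theorem
    {H : Type*} [NormedAddCommGroup H] [InnerProductSpace ℝ H] [CompleteSpace H]
    {n : ℕ} (η : Fin n → H) (C : (Fin n → ℝ) → ℝ) (lam : ℝ) (hlam : 0 < lam)
    (J : H → ℝ)
    (hJ : ∀ f, J f = C (fun i => ⟪η i, f⟫_ℝ) + lam * ‖f‖ ^ 2) :
    (∀ fstar : H, (∀ f, J fstar ≤ J f) →
        fstar ∈ Submodule.span ℝ (Set.range η)) ∧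
    (∀ f f₀ f₁ : H, f = f₀ + f₁ →
        f₀ ∈ Submodule.span ℝ (Set.range η) →
        (∀ g ∈ Submodule.span ℝ (Set.range η), ⟪f₁, g⟫_ℝ = 0) →
        J f₀ ≤ J f) := by
  set K := Submodule.span ℝ (Set.range η) with hK
  have key : ∀ f f₀ f₁ : H, f = f₀ + f₁ → f₀ ∈ K →
      (∀ g ∈ K, ⟪f₁, g⟫_ℝ = 0) →
      (∀ i, ⟪η i, f⟫_ℝ = ⟪η i, f₀⟫_ℝ) ∧ ‖f‖ ^ 2 = ‖f₀‖ ^ 2 + ‖f₁‖ ^ 2 := by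
    intro f f₀ f₁ hsum h₀ horth
    have hinner : ⟪f₀, f₁⟫_ℝ = 0 := by
      rw [real_inner_comm]; exact horth f₀ h₀
    constructor
    · intro i
      have hi : (η i) ∈ K := Submodule.subset_span ⟨i, rfl⟩
      have : ⟪η i, f₁⟫_ℝ = 0 := by rw [real_inner_comm]; exact horth _ hi
      rw [hsum, inner_add_right, this, add_zero]
    · rw [hsum, @norm_add_sq_real, hinner]; ring
  have part2 : ∀ f f₀ f₁ : H, f = f₀ + f₁ → f₀ ∈ K →
      (∀ g ∈ K, ⟪f₁, g⟫_ℝ = 0) → J f₀ ≤ J f := by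
    intro f f₀ f₁ hsum h₀ horth
    obtain ⟨h1, h2⟩ := key f f₀ f₁ hsum h₀ horth
    rw [hJ f, hJ f₀]
    have hC : C (fun i => ⟪η i, f⟫_ℝ) = C (fun i => ⟪η i, f₀⟫_ℝ) := by
      congr 1; funext i; exact h1 i
    rw [hC, h2]
    nlinarith [sq_nonneg ‖f₁‖, hlam.le]
  refine ⟨?_, part2⟩
  intro fstar hmin
  haveI : FiniteDimensional ℝ K := FiniteDimensional.span_of_finite ℝ (Set.finite_range η)
  set f₀ : H := (K.orthogonalProjectionOnto fstar : H) with hf₀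
  set f₁ : H := fstar - f₀ with hf₁
  have hsum : fstar = f₀ + f₁ := by simp [hf₁]
  have h₀ : f₀ ∈ K := (K.orthogonalProjectionOnto fstar).2
  have horth : ∀ g ∈ K, ⟪f₁, g⟫_ℝ = 0 := by
    intro g hg
    have := Submodule.sub_starProjection_mem_orthogonal (K := K) fstar
    rw [real_inner_comm]
    exact (Submodule.mem_orthogonal K f₁).mp this g hg
  obtain ⟨h1, h2⟩ := key fstar f₀ f₁ hsum h₀ horth
  have hle : J fstar ≤ J f₀ := hmin f₀
  have hC : C (fun i => ⟪η i, fstar⟫_ℝ) = C (fun i => ⟪η i, f₀⟫_ℝ) := by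
    congr 1; funext i; exact h1 i
  rw [hJ fstar, hJ f₀, hC, h2] at hle
  have hnorm : ‖f₁‖ ^ 2 ≤ 0 := by nlinarith
  have : f₁ = 0 := by
    have : ‖f₁‖ = 0 := by nlinarith [sq_nonneg ‖f₁‖, norm_nonneg f₁]
    exact norm_eq_zero.mp this
  rw [hsum, this, add_zero]
  exact h₀
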